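/- Let d ≥ 1 and let 1 ≤ pᵢ ≤ qᵢ < ∞ for i = 1, 2. Suppose there exists a constant C > 0 such that ‖f‖_{M^{p₁}_{q₁}} ≤ C · ‖f‖_{M^{p₂}_{q₂}} for every measurable function f on ℝ^d. Then q₁ = q₂ and p₁ ≤ p₂. -/

import Mathlib

open MeasureTheory Metric ENNReal

/-- The Morrey norm `‖f‖_{M^p_q}` of a measurable function `f : ℝ^d → ℝ`:
`sup_{a ∈ ℝ^d, r > 0} |B(a,r)|^{1/q} · ((1/|B(a,r)|) ∫_{B(a,r)} |f(y)|^p dy)^{1/p}`. -/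
noncomputable def morreyNorm (d : ℕ) (p q : ℝ)
    (f : EuclideanSpace ℝ (Fin d) → ℝ) : ℝ≥0∞ :=
  ⨆ (a : EuclideanSpace ℝ (Fin d)) (r : ℝ) (_ : 0 < r),
    volume (ball a r) ^ (1 / q) *
      ((volume (ball a r))⁻¹ *
        ∫⁻ y in ball a r, ENNReal.ofReal (|f y| ^ p)) ^ (1 / p)

/-- The weak Morrey quasi-norm `‖f‖_{wM^p_q} := sup_{γ>0} γ · ‖χ_{{x : |f x| > γ}}‖_{M^p_q}`. -/
noncomputable def weakMorreyNorm (d : ℕ) (p q : ℝ)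
    (f : EuclideanSpace ℝ (Fin d) → ℝ) : ℝ≥0∞ :=
  ⨆ (γ : ℝ) (_ : 0 < γ),
    ENNReal.ofReal γ * morreyNorm d p q (Set.indicator {x | γ < |f x|} 1)

variable {d : ℕ}


lemma mkernel1 {p q : ℝ} (hp : 0 < p) (hq : 0 < q) (hpq : p ≤ q) {A I W : ℝ≥0∞}
    (hA0 : A ≠ 0) (hAtop : A ≠ ⊤) (hIA : I ≤ A) (hIW : I ≤ W) :
    A ^ (1/q) * (A⁻¹ * I) ^ (1/p) ≤ W ^ (1/q) := by
  have hq0 : (0:ℝ) ≤ 1/q := by positivity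
  have hp0 : (0:ℝ) ≤ 1/p := by positivity
  rcases le_total A W with hAW | hWA
  · have h1 : A⁻¹ * I ≤ 1 := by
      calc A⁻¹ * I ≤ A⁻¹ * A := by gcongr
      _ = 1 := ENNReal.inv_mul_cancel hA0 hAtop
    calc A ^ (1/q) * (A⁻¹ * I) ^ (1/p) ≤ A ^ (1/q) * 1 := by
          gcongr
          exact ENNReal.rpow_le_one h1 hp0
      _ = A ^ (1/q) := mul_one _
      _ ≤ W ^ (1/q) := by gcongr
  · have h1 : A⁻¹ * W ≤ 1 := by
      calc A⁻¹ * W ≤ A⁻¹ * A := by gcongr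
      _ = 1 := ENNReal.inv_mul_cancel hA0 hAtop
    have h2 : (A⁻¹ * I) ^ (1/p) ≤ (A⁻¹ * W) ^ (1/q) := by
      calc (A⁻¹ * I) ^ (1/p) ≤ (A⁻¹ * W) ^ (1/p) := by gcongr
      _ ≤ (A⁻¹ * W) ^ (1/q) := by
          apply ENNReal.rpow_le_rpow_of_exponent_ge h1
          gcongr
    calc A ^ (1/q) * (A⁻¹ * I) ^ (1/p) ≤ A ^ (1/q) * (A⁻¹ * W) ^ (1/q) := by gcongr
      _ = (A * (A⁻¹ * W)) ^ (1/q) := (ENNReal.mul_rpow_of_nonneg _ _ hq0).symm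
      _ = W ^ (1/q) := by rw [← mul_assoc, ENNReal.mul_inv_cancel hA0 hAtop, one_mul]

lemma mkernel2 {p q : ℝ} (hp : 0 < p) (hq : 0 < q) (hpq : p ≤ q) {A I W J : ℝ≥0∞}
    (hA0 : A ≠ 0) (hAtop : A ≠ ⊤) (hW0 : W ≠ 0) (hWtop : W ≠ ⊤)
    (hWA : W ≤ A) (hIJ : I ≤ J) :
    A ^ (1/q) * (A⁻¹ * I) ^ (1/p) ≤ W ^ (1/q) * (W⁻¹ * J) ^ (1/p) := by
  have hp0 : (0:ℝ) ≤ 1/p := by positivity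
  have hJ : A⁻¹ * I ≤ (A⁻¹ * W) * (W⁻¹ * J) := by
    have : (A⁻¹ * W) * (W⁻¹ * J) = A⁻¹ * J := by
      rw [mul_assoc, ← mul_assoc W, ENNReal.mul_inv_cancel hW0 hWtop, one_mul]
    rw [this]; gcongr
  calc A ^ (1/q) * (A⁻¹ * I) ^ (1/p)
      ≤ A ^ (1/q) * ((A⁻¹ * W) * (W⁻¹ * J)) ^ (1/p) := by gcongr
    _ = (A ^ (1/q) * (A⁻¹ * W) ^ (1/p)) * (W⁻¹ * J) ^ (1/p) := by
        rw [ENNReal.mul_rpow_of_nonneg _ _ hp0, mul_assoc]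
    _ ≤ W ^ (1/q) * (W⁻¹ * J) ^ (1/p) := by
        gcongr
        exact mkernel1 hp hq hpq hA0 hAtop hWA le_rfl


lemma indicator_rpow_eq {p : ℝ} (hp : p ≠ 0) (E : Set (EuclideanSpace ℝ (Fin d)))
    (y : EuclideanSpace ℝ (Fin d)) :
    ENNReal.ofReal (|Set.indicator E (1 : EuclideanSpace ℝ (Fin d) → ℝ) y| ^ p)
      = Set.indicator E (fun _ => (1 : ℝ≥0∞)) y := by
  by_cases hy : y ∈ E
  · simp [Set.indicator_of_mem hy, Real.one_rpow]
  · simp [Set.indicator_of_notMem hy, Real.zero_rpow hp]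

lemma lintegral_indicator_rpow {p : ℝ} (hp : p ≠ 0) {E : Set (EuclideanSpace ℝ (Fin d))}
    (hE : MeasurableSet E) (B : Set (EuclideanSpace ℝ (Fin d))) :
    (∫⁻ y in B, ENNReal.ofReal (|Set.indicator E (1 : EuclideanSpace ℝ (Fin d) → ℝ) y| ^ p))
      = volume (E ∩ B) := by
  simp_rw [indicator_rpow_eq hp]
  rw [lintegral_indicator hE]
  simp [Measure.restrict_restrict hE, Set.inter_comm]

lemma morreyNorm_indicator_le {p q : ℝ} (hp : p ≠ 0) {E : Set (EuclideanSpace ℝ (Fin d))}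
    (hE : MeasurableSet E) (D : ℝ≥0∞)
    (hD : ∀ (a : EuclideanSpace ℝ (Fin d)) (r : ℝ), 0 < r →
      volume (ball a r) ^ (1/q) *
        ((volume (ball a r))⁻¹ * volume (E ∩ ball a r)) ^ (1/p) ≤ D) :
    morreyNorm d p q (Set.indicator E 1) ≤ D := by
  refine iSup_le fun a => iSup_le fun r => iSup_le fun hr => ?_
  rw [lintegral_indicator_rpow hp hE]
  exact hD a r hr

lemma le_morreyNorm_indicator {p q : ℝ} (hp : p ≠ 0) {E : Set (EuclideanSpace ℝ (Fin d))}
    (hE : MeasurableSet E) (a : EuclideanSpace ℝ (Fin d)) {r : ℝ} (hr : 0 < r) :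
    volume (ball a r) ^ (1/q) *
        ((volume (ball a r))⁻¹ * volume (E ∩ ball a r)) ^ (1/p)
      ≤ morreyNorm d p q (Set.indicator E 1) := by
  have : volume (ball a r) ^ (1/q) *
        ((volume (ball a r))⁻¹ *
          ∫⁻ y in ball a r, ENNReal.ofReal (|Set.indicator E 1 y| ^ p)) ^ (1/p)
      ≤ morreyNorm d p q (Set.indicator E 1) :=
    le_iSup_of_le a <| le_iSup_of_le r <| le_iSup_of_le hr le_rfl
  rwa [lintegral_indicator_rpow hp hE] at this
variable {d : ℕ}

lemma vball_ne_zero (a : EuclideanSpace ℝ (Fin d)) {r : ℝ} (hr : 0 < r) :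
    volume (ball a r) ≠ 0 := (measure_ball_pos volume a hr).ne'

lemma vball_ne_top (a : EuclideanSpace ℝ (Fin d)) (r : ℝ) :
    volume (ball a r) ≠ ⊤ := measure_ball_lt_top.ne

lemma unitball_toReal_pos (hd : 0 < d) :
    0 < (volume (ball (0:EuclideanSpace ℝ (Fin d)) 1)).toReal :=
  ENNReal.toReal_pos (vball_ne_zero 0 one_pos) (vball_ne_top 0 1)

lemma vball_eq (hd : 0 < d) {r : ℝ} (hr : 0 ≤ r) (a : EuclideanSpace ℝ (Fin d)) :
    volume (ball a r)
      = ENNReal.ofReal (r ^ d * (volume (ball (0:EuclideanSpace ℝ (Fin d)) 1)).toReal) := by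
  haveI : Nonempty (Fin d) := ⟨⟨0, hd⟩⟩
  haveI : Nontrivial (EuclideanSpace ℝ (Fin d)) := inferInstance
  rw [Measure.addHaar_ball volume a hr, finrank_euclideanSpace_fin,
    ENNReal.ofReal_mul (by positivity), ENNReal.ofReal_toReal (vball_ne_top 0 1)]

-- real-side contradiction for part 1
lemma part1_real {q₁ q₂ C : ℝ} (hq₁ : 0 < q₁) (hq₂ : 0 < q₂) (hC : 0 < C)
    (h : ∀ s : ℝ, 0 < s → s ^ (1/q₁) ≤ C * s ^ (1/q₂)) : q₁ = q₂ := by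
  by_contra hne
  have hγ : 1/q₁ - 1/q₂ ≠ 0 := by
    intro h0
    apply hne
    have : 1/q₁ = 1/q₂ := by linarith
    field_simp at this
    linarith
  set γ := 1/q₁ - 1/q₂ with hγdef
  have key : ∀ s : ℝ, 0 < s → s ^ γ ≤ C := by
    intro s hs
    have h1 := h s hs
    have h2 : s ^ (1/q₁) = s ^ γ * s ^ (1/q₂) := by
      rw [← Real.rpow_add hs, hγdef]; ring_nf
    have h3 : (0:ℝ) < s ^ (1/q₂) := Real.rpow_pos_of_pos hs _
    rw [h2] at h1
    calc s ^ γ = s ^ γ * s ^ (1/q₂) / s ^ (1/q₂) := by field_simp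
      _ ≤ C * s ^ (1/q₂) / s ^ (1/q₂) := by gcongr
      _ = C := by field_simp
  have hs : (0:ℝ) < (C+1) ^ γ⁻¹ := Real.rpow_pos_of_pos (by linarith) _
  have := key _ hs
  rw [Real.rpow_inv_rpow (by linarith) hγ] at this
  linarith

lemma morreyNorm_ball_indicator {d : ℕ} {p q : ℝ} (hp : 0 < p) (hq : 0 < q) (hpq : p ≤ q)
    {R : ℝ} (hR : 0 < R) :
    morreyNorm d p q (Set.indicator (ball (0:EuclideanSpace ℝ (Fin d)) R) 1)
      = (volume (ball (0:EuclideanSpace ℝ (Fin d)) R)) ^ (1/q) := by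
  set V := volume (ball (0:EuclideanSpace ℝ (Fin d)) R) with hV
  apply le_antisymm
  · apply morreyNorm_indicator_le hp.ne' measurableSet_ball
    intro a r hr
    exact mkernel1 hp hq hpq (vball_ne_zero a hr) (vball_ne_top a r)
      (measure_mono Set.inter_subset_right) (measure_mono Set.inter_subset_left)
  · have h := le_morreyNorm_indicator (p := p) (q := q)
      (E := ball (0:EuclideanSpace ℝ (Fin d)) R) hp.ne' measurableSet_ball
      (0:EuclideanSpace ℝ (Fin d)) hR
    rwa [Set.inter_self, ← hV, ENNReal.inv_mul_cancel (vball_ne_zero 0 hR) (vball_ne_top 0 R),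
      ENNReal.one_rpow, mul_one] at h

lemma part1 {d : ℕ} (hd : 0 < d) {p₁ q₁ p₂ q₂ C : ℝ} (hp₁ : 0 < p₁) (hq₁ : 0 < q₁)
    (hpq₁ : p₁ ≤ q₁) (hp₂ : 0 < p₂) (hq₂ : 0 < q₂) (hpq₂ : p₂ ≤ q₂) (hC : 0 < C)
    (h : ∀ f : EuclideanSpace ℝ (Fin d) → ℝ, Measurable f →
      morreyNorm d p₁ q₁ f ≤ ENNReal.ofReal C * morreyNorm d p₂ q₂ f) : q₁ = q₂ := by
  set v₀ := (volume (ball (0:EuclideanSpace ℝ (Fin d)) 1)).toReal with hv₀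
  have hv₀pos : 0 < v₀ := unitball_toReal_pos hd
  apply part1_real hq₁ hq₂ hC
  intro s hs
  set R : ℝ := (s / v₀) ^ ((d:ℝ))⁻¹ with hRdef
  have hR : 0 < R := Real.rpow_pos_of_pos (by positivity) _
  have hRd : R ^ d * v₀ = s := by
    rw [hRdef, Real.rpow_inv_natCast_pow (by positivity) hd.ne']
    field_simp
  have hmeas : Measurable (Set.indicator (ball (0:EuclideanSpace ℝ (Fin d)) R) 1 :
      EuclideanSpace ℝ (Fin d) → ℝ) :=
    measurable_const.indicator measurableSet_ball
  have hnorm := h _ hmeas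
  rw [morreyNorm_ball_indicator hp₁ hq₁ hpq₁ hR, morreyNorm_ball_indicator hp₂ hq₂ hpq₂ hR,
    vball_eq hd hR.le, hRd] at hnorm
  rw [ENNReal.ofReal_rpow_of_pos hs, ENNReal.ofReal_rpow_of_pos hs,
    ← ENNReal.ofReal_mul hC.le, ENNReal.ofReal_le_ofReal_iff (by positivity)] at hnorm
  exact hnorm




def mbox (d : ℕ) (c : Fin d → ℝ) (l : ℝ) : Set (EuclideanSpace ℝ (Fin d)) :=
  {x | ∀ i, c i ≤ x i ∧ x i < c i + l}

lemma mbox_eq (c : Fin d → ℝ) (l : ℝ) :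
    mbox d c l = (MeasurableEquiv.toLp 2 (Fin d → ℝ)).symm ⁻¹'
      (Set.pi Set.univ (fun i => Set.Ico (c i) (c i + l))) := by
  ext x
  simp [mbox, Set.mem_pi, Set.mem_Ico]

lemma mbox_measurable (c : Fin d → ℝ) (l : ℝ) : MeasurableSet (mbox d c l) := by
  rw [mbox_eq]
  exact (MeasurableEquiv.toLp 2 (Fin d → ℝ)).symm.measurable
    (MeasurableSet.univ_pi (fun i => measurableSet_Ico))

lemma mbox_volume (c : Fin d → ℝ) {l : ℝ} (hl : 0 ≤ l) :
    volume (mbox d c l) = ENNReal.ofReal (l ^ d) := by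
  rw [mbox_eq, (EuclideanSpace.volume_preserving_symm_measurableEquiv_toLp (Fin d)).measure_preimage
    (MeasurableSet.univ_pi (fun i => measurableSet_Ico)).nullMeasurableSet]
  rw [volume_pi_pi]
  simp [Real.volume_Ico, ENNReal.ofReal_pow hl]

lemma mbox_disjoint {M : ℕ} {l : ℝ} (hl : l ≤ 1) {k k' : Fin d → Fin M} (hkk : k ≠ k') :
    Disjoint (mbox d (fun i => (k i : ℝ)) l) (mbox d (fun i => (k' i : ℝ)) l) := by
  rw [Set.disjoint_left]
  intro x hx hx'
  obtain ⟨i, hi⟩ := Function.ne_iff.mp hkk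
  have h1 := hx i
  have h2 := hx' i
  simp only at h1 h2
  have hne : (k i).val ≠ (k' i).val := fun hv => hi (Fin.ext hv)
  rcases hne.lt_or_gt with hlt | hlt
  · have : ((k i : ℕ) : ℝ) + 1 ≤ ((k' i : ℕ) : ℝ) := by exact_mod_cast hlt
    linarith
  · have : ((k' i : ℕ) : ℝ) + 1 ≤ ((k i : ℕ) : ℝ) := by exact_mod_cast hlt
    linarith

/-- The union of `M^d` small boxes of side `ε` with corners at integer points of `[0,M)^d`. -/
def ESet (d M : ℕ) (ε : ℝ) : Set (EuclideanSpace ℝ (Fin d)) :=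
  ⋃ k : Fin d → Fin M, mbox d (fun i => (k i : ℝ)) ε

lemma ESet_measurable (M : ℕ) (ε : ℝ) : MeasurableSet (ESet d M ε) :=
  MeasurableSet.iUnion fun k => mbox_measurable _ _

lemma ESet_volume (M : ℕ) {ε : ℝ} (hε0 : 0 ≤ ε) (hε1 : ε ≤ 1) :
    volume (ESet d M ε) = ENNReal.ofReal ((M:ℝ)^d * ε^d) := by
  rw [ESet, measure_iUnion (fun k k' hkk => mbox_disjoint hε1 hkk)
    (fun k => mbox_measurable _ _)]
  simp_rw [mbox_volume _ hε0]
  rw [tsum_fintype, Finset.sum_const, Finset.card_univ, Fintype.card_fun, Fintype.card_fin,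
    Fintype.card_fin, nsmul_eq_mul]
  rw [← ENNReal.ofReal_natCast, ← ENNReal.ofReal_mul (by positivity)]
  push_cast
  ring_nf

lemma dist_le_of_coord {x y : EuclideanSpace ℝ (Fin d)} {c : ℝ} (hc : 0 ≤ c)
    (h : ∀ i, |x i - y i| ≤ c) : dist x y ≤ c * Real.sqrt d := by
  rw [EuclideanSpace.dist_eq]
  have hsum : ∑ i, dist (x i) (y i) ^ 2 ≤ (d:ℝ) * c^2 := by
    have h2 : ∑ i, dist (x i) (y i) ^ 2 ≤ ∑ _i : Fin d, c^2 := by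
      apply Finset.sum_le_sum
      intro i _
      rw [Real.dist_eq]
      exact pow_le_pow_left₀ (abs_nonneg _) (h i) 2
    simpa [Finset.sum_const, Finset.card_univ, mul_comm] using h2
  calc Real.sqrt (∑ i, dist (x i) (y i) ^ 2) ≤ Real.sqrt ((d:ℝ) * c^2) :=
      Real.sqrt_le_sqrt hsum
    _ = c * Real.sqrt d := by
      rw [Real.sqrt_mul (by positivity), Real.sqrt_sq hc, mul_comm]

lemma one_le_sqrt_d (hd : 0 < d) : 1 ≤ Real.sqrt d := by
  rw [show (1:ℝ) = Real.sqrt 1 by simp]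
  apply Real.sqrt_le_sqrt
  exact_mod_cast hd

lemma ESet_subset_ball (hd : 0 < d) {M : ℕ} (hM : 1 ≤ M) {ε : ℝ} (hε1 : ε ≤ 1) :
    ESet d M ε ⊆ ball (WithLp.toLp 2 (fun _ => (M:ℝ)/2) : EuclideanSpace ℝ (Fin d))
      ((M:ℝ) * Real.sqrt d) := by
  intro x hx
  obtain ⟨k, hk⟩ := Set.mem_iUnion.mp hx
  have hM1 : (1:ℝ) ≤ (M:ℝ) := by exact_mod_cast hM
  have hcoord : ∀ i, |x i - (M:ℝ)/2| ≤ (M:ℝ)/2 := by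
    intro i
    have h1 := (hk i).1
    have h2 := (hk i).2
    simp only at h1 h2
    have hk0 : (0:ℝ) ≤ ((k i : ℕ) : ℝ) := Nat.cast_nonneg _
    have hki : ((k i : ℕ) : ℝ) ≤ (M:ℝ) - 1 := by
      have h3 : (k i : ℕ) + 1 ≤ M := (k i).isLt
      have h4 := (Nat.cast_le (α := ℝ)).mpr h3
      push_cast at h4
      linarith
    rw [abs_le]
    constructor <;> linarith
  rw [mem_ball]
  calc dist x (WithLp.toLp 2 (fun _ => (M:ℝ)/2) : EuclideanSpace ℝ (Fin d))
      ≤ (M:ℝ)/2 * Real.sqrt d := dist_le_of_coord (by linarith) hcoord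
    _ < (M:ℝ) * Real.sqrt d := by
        have hs : 0 < Real.sqrt d := lt_of_lt_of_le one_pos (one_le_sqrt_d hd)
        have : (M:ℝ)/2 < (M:ℝ) := by linarith
        exact mul_lt_mul_of_pos_right this hs


lemma ESet_inter_ball_le (hd : 0 < d) (M : ℕ) {ε r : ℝ} (hε0 : 0 ≤ ε) (hε1 : ε ≤ 1)
    (hr : 1 ≤ r) (a : EuclideanSpace ℝ (Fin d)) :
    volume (ESet d M ε ∩ ball a r)
      ≤ ENNReal.ofReal (ε^d) * volume (ball a ((1 + Real.sqrt d) * r)) := by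
  classical
  set S : Finset (Fin d → Fin M) :=
    Finset.univ.filter (fun k => (mbox d (fun i => (k i:ℝ)) ε ∩ ball a r).Nonempty) with hS
  have hsub : ESet d M ε ∩ ball a r ⊆ ⋃ k ∈ S, mbox d (fun i => (k i:ℝ)) ε := by
    rintro x ⟨hxE, hxB⟩
    obtain ⟨k, hk⟩ := Set.mem_iUnion.mp hxE
    have hkS : k ∈ S := by
      rw [hS]
      exact Finset.mem_filter.mpr ⟨Finset.mem_univ _, ⟨x, hk, hxB⟩⟩
    exact Set.mem_biUnion hkS hk
  -- the big boxes attached to members of S sit inside the enlarged ball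
  have hbig : ∀ k ∈ S, mbox d (fun i => (k i:ℝ)) 1 ⊆ ball a ((1 + Real.sqrt d) * r) := by
    intro k hk
    simp only [hS, Finset.mem_filter] at hk
    obtain ⟨x, hxbox, hxball⟩ := hk.2
    intro y hy
    have hdist : dist y x ≤ 1 * Real.sqrt d := by
      apply dist_le_of_coord zero_le_one
      intro i
      have h1 := (hxbox i).1
      have h2 := (hxbox i).2
      have h3 := (hy i).1
      have h4 := (hy i).2
      simp only at h1 h2 h3 h4
      rw [abs_le]
      constructor <;> linarith
    rw [mem_ball]
    have hsd : (0:ℝ) ≤ Real.sqrt d := Real.sqrt_nonneg _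
    calc dist y a ≤ dist y x + dist x a := dist_triangle y x a
      _ < 1 * Real.sqrt d + r := by
          have := mem_ball.mp hxball
          linarith
      _ ≤ (1 + Real.sqrt d) * r := by nlinarith
  have hcard : (S.card : ℝ≥0∞) ≤ volume (ball a ((1 + Real.sqrt d) * r)) := by
    have hdisj : Set.PairwiseDisjoint (↑S) (fun k : Fin d → Fin M => mbox d (fun i => (k i:ℝ)) 1) :=
      fun k _ k' _ hkk => mbox_disjoint le_rfl hkk
    have := measure_biUnion_finset (μ := volume) hdisj
      (fun k _ => mbox_measurable (fun i => ((k i : ℕ):ℝ)) 1)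
    calc (S.card : ℝ≥0∞) = ∑ k ∈ S, volume (mbox d (fun i => (k i:ℝ)) 1) := by
          simp [mbox_volume _ zero_le_one]
      _ = volume (⋃ k ∈ S, mbox d (fun i => (k i:ℝ)) 1) := this.symm
      _ ≤ volume (ball a ((1 + Real.sqrt d) * r)) :=
          measure_mono (Set.iUnion₂_subset hbig)
  calc volume (ESet d M ε ∩ ball a r)
      ≤ ∑ k ∈ S, volume (mbox d (fun i => (k i:ℝ)) ε) :=
        (measure_mono hsub).trans (measure_biUnion_finset_le S _)
    _ = ENNReal.ofReal (ε^d) * S.card := by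
        simp [mbox_volume _ hε0, Finset.sum_const, nsmul_eq_mul, mul_comm]
    _ ≤ ENNReal.ofReal (ε^d) * volume (ball a ((1 + Real.sqrt d) * r)) := by gcongr


lemma part2_real (d : ℕ) (hd : 0 < d) {q p₁ p₂ C v₀ : ℝ} (hq : 0 < q)
    (hp₁ : 0 < p₁) (hp₂ : 0 < p₂) (hp₂₁ : p₂ < p₁) (hC : 0 < C) (hv : 0 < v₀) :
    ∃ ε : ℝ, (0 < ε ∧ ε ≤ 1) ∧ ∃ M : ℕ, 1 ≤ M ∧
      C * (((1:ℝ)^d * v₀) ^ (1/q))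
        + C * ((ε^d * (1+Real.sqrt d)^d) ^ (1/p₂) * (((M:ℝ)^d * v₀) ^ (1/q)))
        + C * ((((M:ℝ)^d * v₀) ^ (1/q)) * (((M:ℝ)^d * ε^d / ((M:ℝ)^d * v₀)) ^ (1/p₂)))
      < ((((M:ℝ) * Real.sqrt d)^d * v₀) ^ (1/q))
          * (((M:ℝ)^d * ε^d / (((M:ℝ) * Real.sqrt d)^d * v₀)) ^ (1/p₁)) := by
  have hs : 1 ≤ Real.sqrt d := by
    rw [show (1:ℝ) = Real.sqrt 1 by simp]
    exact Real.sqrt_le_sqrt (by exact_mod_cast hd)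
  set s := Real.sqrt d with hsdef
  have hs0 : 0 < s := lt_of_lt_of_le one_pos hs
  set K : ℝ := 1 + s with hKdef
  have hK0 : 0 < K := by positivity
  -- constants
  set g₀ : ℝ := (s^d * v₀) ^ (1/q) / (s^d * v₀) ^ (1/p₁) with hg₀def
  have hg₀ : 0 < g₀ := by positivity
  set h₀ : ℝ := C * (K^d) ^ (1/p₂) * v₀ ^ (1/q) + C * v₀ ^ (1/q) * ((1/v₀) ^ (1/p₂)) with hh₀def
  have hh₀ : 0 < h₀ := by positivity
  set β : ℝ := 1/p₂ - 1/p₁ with hβdef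
  have hβ : 0 < β := by
    rw [hβdef]
    have : 1/p₁ < 1/p₂ := one_div_lt_one_div_of_lt hp₂ hp₂₁
    linarith
  -- choose t and ε
  set t : ℝ := min 1 ((g₀/(2*h₀)) ^ β⁻¹) with htdef
  have ht0 : 0 < t := lt_min one_pos (Real.rpow_pos_of_pos (by positivity) _)
  have ht1 : t ≤ 1 := min_le_left _ _
  set ε : ℝ := t ^ ((d:ℝ))⁻¹ with hεdef
  have hε0 : 0 < ε := Real.rpow_pos_of_pos ht0 _
  have hε1 : ε ≤ 1 := Real.rpow_le_one ht0.le ht1 (by positivity)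
  have hεd : ε ^ d = t := Real.rpow_inv_natCast_pow ht0.le hd.ne'
  -- key smallness of t
  have key1 : h₀ * t ^ (1/p₂) ≤ g₀/2 * t ^ (1/p₁) := by
    have htβ : t ^ β ≤ g₀ / (2*h₀) := by
      have h1 : t ≤ (g₀/(2*h₀)) ^ β⁻¹ := min_le_right _ _
      calc t ^ β ≤ ((g₀/(2*h₀)) ^ β⁻¹) ^ β := Real.rpow_le_rpow ht0.le h1 hβ.le
        _ = g₀ / (2*h₀) := Real.rpow_inv_rpow (by positivity) hβ.ne'
    have hsplit : t ^ (1/p₂) = t ^ β * t ^ (1/p₁) := by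
      rw [← Real.rpow_add ht0]
      congr 1
      rw [hβdef]; ring
    rw [hsplit]
    calc h₀ * (t ^ β * t ^ (1/p₁)) = (h₀ * t ^ β) * t ^ (1/p₁) := by ring
      _ ≤ (h₀ * (g₀ / (2*h₀))) * t ^ (1/p₁) := by
          have h2 : (0:ℝ) ≤ t ^ (1/p₁) := (Real.rpow_pos_of_pos ht0 _).le
          have h3 : h₀ * t ^ β ≤ h₀ * (g₀/(2*h₀)) := by
            apply mul_le_mul_of_nonneg_left htβ hh₀.le
          exact mul_le_mul_of_nonneg_right h3 h2
      _ = g₀/2 * t ^ (1/p₁) := by field_simp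
  -- choose M
  set X : ℝ := 2 * (C * (((1:ℝ)^d * v₀) ^ (1/q))) / (g₀ * t ^ (1/p₁)) with hXdef
  obtain ⟨M, hM⟩ := exists_nat_gt (max 1 ((max 1 X) ^ q))
  have hmax1 : (1:ℝ) ≤ max 1 X := le_max_left _ _
  have hM1R : (1:ℝ) < (M:ℝ) := lt_of_le_of_lt (le_max_left _ _) hM
  have hM1 : 1 ≤ M := by exact_mod_cast hM1R.le
  refine ⟨ε, ⟨hε0, hε1⟩, M, hM1, ?_⟩
  have hMpos : (0:ℝ) < (M:ℝ) := by linarith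
  set N : ℝ := (M:ℝ)^d with hNdef
  have hN1 : 1 ≤ N := one_le_pow₀ hM1R.le
  have hN0 : 0 < N := by linarith
  -- N^{1/q} > X
  have hNq : X < N ^ (1/q) := by
    have h1 : (max 1 X) ^ q < (M:ℝ) := lt_of_le_of_lt (le_max_right _ _) hM
    have h2 : ((max 1 X) ^ q) ^ (1/q) < (M:ℝ) ^ (1/q) :=
      Real.rpow_lt_rpow (by positivity) h1 (by positivity)
    have h3 : ((max 1 X) ^ q) ^ (1/q) = max 1 X := by
      rw [← Real.rpow_mul (by positivity), mul_one_div, div_self hq.ne', Real.rpow_one]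
    have h5 : (M:ℝ) ^ (1/q) ≤ N ^ (1/q) := by
      apply Real.rpow_le_rpow hMpos.le _ (by positivity)
      rw [hNdef]
      exact le_self_pow₀ hM1R.le hd.ne'
    calc X ≤ max 1 X := le_max_right _ _
      _ < (M:ℝ) ^ (1/q) := h3 ▸ h2
      _ ≤ N ^ (1/q) := h5
  have hNq0 : (0:ℝ) < N ^ (1/q) := Real.rpow_pos_of_pos hN0 _
  have htp1 : (0:ℝ) < t ^ (1/p₁) := Real.rpow_pos_of_pos ht0 _
  have htp2 : (0:ℝ) < t ^ (1/p₂) := Real.rpow_pos_of_pos ht0 _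
  -- algebraic identities
  have e1 : ((M:ℝ)*s)^d * v₀ = N * (s^d * v₀) := by rw [hNdef, mul_pow]; ring
  have hRHS : ((((M:ℝ) * s)^d * v₀) ^ (1/q))
      * (((M:ℝ)^d * ε^d / (((M:ℝ) * s)^d * v₀)) ^ (1/p₁))
      = N ^ (1/q) * g₀ * t ^ (1/p₁) := by
    rw [e1, hεd, ← hNdef]
    rw [show N * t / (N * (s^d*v₀)) = t / (s^d*v₀) from mul_div_mul_left _ _ hN0.ne']
    rw [Real.mul_rpow hN0.le (by positivity), Real.div_rpow ht0.le (by positivity), hg₀def]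
    field_simp
  have hT2 : C * ((ε^d * K^d) ^ (1/p₂) * (((M:ℝ)^d * v₀) ^ (1/q)))
      = N ^ (1/q) * (C * (K^d) ^ (1/p₂) * v₀ ^ (1/q)) * t ^ (1/p₂) := by
    rw [hεd, ← hNdef, Real.mul_rpow ht0.le (by positivity),
      Real.mul_rpow hN0.le hv.le]
    ring
  have hT3 : C * ((((M:ℝ)^d * v₀) ^ (1/q)) * (((M:ℝ)^d * ε^d / ((M:ℝ)^d * v₀)) ^ (1/p₂)))
      = N ^ (1/q) * (C * v₀ ^ (1/q) * ((1/v₀) ^ (1/p₂))) * t ^ (1/p₂) := by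
    rw [hεd, ← hNdef]
    rw [show N * t / (N * v₀) = t / v₀ from mul_div_mul_left _ _ hN0.ne']
    rw [Real.mul_rpow hN0.le hv.le, Real.div_rpow ht0.le hv.le,
      Real.div_rpow zero_le_one hv.le, Real.one_rpow]
    ring
  have hsum23 : C * ((ε^d * K^d) ^ (1/p₂) * (((M:ℝ)^d * v₀) ^ (1/q)))
      + C * ((((M:ℝ)^d * v₀) ^ (1/q)) * (((M:ℝ)^d * ε^d / ((M:ℝ)^d * v₀)) ^ (1/p₂)))
      ≤ N ^ (1/q) * (g₀/2) * t ^ (1/p₁) := by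
    rw [hT2, hT3]
    have : N ^ (1/q) * (C * (K^d) ^ (1/p₂) * v₀ ^ (1/q)) * t ^ (1/p₂)
        + N ^ (1/q) * (C * v₀ ^ (1/q) * ((1/v₀) ^ (1/p₂))) * t ^ (1/p₂)
        = N ^ (1/q) * (h₀ * t ^ (1/p₂)) := by rw [hh₀def]; ring
    rw [this]
    calc N ^ (1/q) * (h₀ * t ^ (1/p₂)) ≤ N ^ (1/q) * (g₀/2 * t ^ (1/p₁)) :=
        mul_le_mul_of_nonneg_left key1 hNq0.le
      _ = N ^ (1/q) * (g₀/2) * t ^ (1/p₁) := by ring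
  have hT1 : C * (((1:ℝ)^d * v₀) ^ (1/q)) < N ^ (1/q) * (g₀/2) * t ^ (1/p₁) := by
    have hX : X * (g₀ * t ^ (1/p₁)) / 2 = C * (((1:ℝ)^d * v₀) ^ (1/q)) := by
      rw [hXdef]
      field_simp
    rw [← hX]
    have := mul_lt_mul_of_pos_right hNq (show (0:ℝ) < g₀ * t ^ (1/p₁) / 2 by positivity)
    calc X * (g₀ * t ^ (1/p₁)) / 2 = X * (g₀ * t ^ (1/p₁) / 2) := by ring
      _ < N ^ (1/q) * (g₀ * t ^ (1/p₁) / 2) := this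
      _ = N ^ (1/q) * (g₀/2) * t ^ (1/p₁) := by ring
  rw [hRHS]
  have : N ^ (1/q) * g₀ * t ^ (1/p₁)
      = N ^ (1/q) * (g₀/2) * t ^ (1/p₁) + N ^ (1/q) * (g₀/2) * t ^ (1/p₁) := by ring
  rw [this]
  linarith


lemma vball_eq' {d : ℕ} (hd : 0 < d) {r : ℝ} (hr : 0 ≤ r) (a : EuclideanSpace ℝ (Fin d))
    {v₀ : ℝ} (hv₀ : v₀ = (volume (ball (0:EuclideanSpace ℝ (Fin d)) 1)).toReal) :
    volume (ball a r) = ENNReal.ofReal (r ^ d * v₀) := by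
  rw [vball_eq hd hr a, hv₀]

lemma le_morreyNorm_ESet {d : ℕ} (hd : 0 < d) {p q : ℝ} (hp : 0 < p) {M : ℕ} (hM : 1 ≤ M)
    {ε : ℝ} (hε0 : 0 ≤ ε) (hε1 : ε ≤ 1)
    {v₀ : ℝ} (hv₀ : v₀ = (volume (ball (0:EuclideanSpace ℝ (Fin d)) 1)).toReal) :
    ENNReal.ofReal (((M:ℝ) * Real.sqrt d)^d * v₀) ^ (1/q) *
      ((ENNReal.ofReal (((M:ℝ) * Real.sqrt d)^d * v₀))⁻¹
        * ENNReal.ofReal ((M:ℝ)^d * ε^d)) ^ (1/p)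
      ≤ morreyNorm d p q (Set.indicator (ESet d M ε) 1) := by
  have hM0 : (0:ℝ) < (M:ℝ) := by exact_mod_cast hM
  have hs0 : (0:ℝ) < Real.sqrt d := lt_of_lt_of_le one_pos (one_le_sqrt_d hd)
  have hr0 : (0:ℝ) < (M:ℝ) * Real.sqrt d := by positivity
  have h := le_morreyNorm_indicator (p := p) (q := q) hp.ne' (ESet_measurable M ε)
    (WithLp.toLp 2 (fun _ => (M:ℝ)/2) : EuclideanSpace ℝ (Fin d)) hr0
  rwa [Set.inter_eq_self_of_subset_left (ESet_subset_ball hd hM hε1),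
    ESet_volume M hε0 hε1, vball_eq' hd hr0.le _ hv₀] at h

lemma morreyNorm_ESet_le {d : ℕ} (hd : 0 < d) {p q : ℝ} (hp : 0 < p) (hq : 0 < q) (hpq : p ≤ q)
    {M : ℕ} (hM : 1 ≤ M) {ε : ℝ} (hε0 : 0 < ε) (hε1 : ε ≤ 1)
    {v₀ : ℝ} (hv₀ : v₀ = (volume (ball (0:EuclideanSpace ℝ (Fin d)) 1)).toReal) :
    morreyNorm d p q (Set.indicator (ESet d M ε) 1)
      ≤ ENNReal.ofReal ((1:ℝ)^d * v₀) ^ (1/q)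
        + ENNReal.ofReal (ε^d * (1+Real.sqrt d)^d) ^ (1/p)
            * ENNReal.ofReal ((M:ℝ)^d * v₀) ^ (1/q)
        + ENNReal.ofReal ((M:ℝ)^d * v₀) ^ (1/q) *
            ((ENNReal.ofReal ((M:ℝ)^d * v₀))⁻¹ * ENNReal.ofReal ((M:ℝ)^d * ε^d)) ^ (1/p) := by
  have hM0 : (0:ℝ) < (M:ℝ) := by exact_mod_cast hM
  have hs0 : (0:ℝ) < Real.sqrt d := lt_of_lt_of_le one_pos (one_le_sqrt_d hd)
  apply morreyNorm_indicator_le hp.ne' (ESet_measurable M ε)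
  intro a r hr
  set A := volume (ball a r) with hA
  have hA0 : A ≠ 0 := vball_ne_zero a hr
  have hAtop : A ≠ ⊤ := vball_ne_top a r
  set I := volume (ESet d M ε ∩ ball a r) with hI
  have hAeq : A = ENNReal.ofReal (r^d * v₀) := vball_eq' hd hr.le a hv₀
  rcases le_total r 1 with h1 | h1
  · -- small radii
    have : A ^ (1/q) * (A⁻¹ * I) ^ (1/p) ≤ ENNReal.ofReal ((1:ℝ)^d * v₀) ^ (1/q) := by
      calc A ^ (1/q) * (A⁻¹ * I) ^ (1/p) ≤ A ^ (1/q) * 1 := by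
            gcongr
            apply ENNReal.rpow_le_one _ (by positivity)
            calc A⁻¹ * I ≤ A⁻¹ * A := by
                  gcongr
                  exact measure_mono Set.inter_subset_right
              _ = 1 := ENNReal.inv_mul_cancel hA0 hAtop
        _ = A ^ (1/q) := mul_one _
        _ ≤ ENNReal.ofReal ((1:ℝ)^d * v₀) ^ (1/q) := by
            gcongr
            rw [hAeq]
            apply ENNReal.ofReal_le_ofReal
            have : r^d ≤ (1:ℝ)^d := pow_le_pow_left₀ hr.le h1 d
            nlinarith [unitball_toReal_pos hd, hv₀]
    exact this.trans (le_add_right le_self_add)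
  · rcases le_total r (M:ℝ) with h2 | h2
    · -- intermediate radii
      have hIle : I ≤ ENNReal.ofReal (ε^d) * volume (ball a ((1 + Real.sqrt d) * r)) :=
        ESet_inter_ball_le hd M hε0.le hε1 h1 a
      have hball : volume (ball a ((1 + Real.sqrt d) * r))
          = ENNReal.ofReal ((1+Real.sqrt d)^d) * A := by
        rw [vball_eq' hd (by positivity) a hv₀, hAeq,
          ← ENNReal.ofReal_mul (by positivity)]
        congr 1
        rw [mul_pow]
        ring
      have hfrac : A⁻¹ * I ≤ ENNReal.ofReal (ε^d * (1+Real.sqrt d)^d) := by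
        calc A⁻¹ * I ≤ A⁻¹ * (ENNReal.ofReal (ε^d)
              * (ENNReal.ofReal ((1+Real.sqrt d)^d) * A)) := by
              rw [← hball]
              gcongr
          _ = ENNReal.ofReal (ε^d) * ENNReal.ofReal ((1+Real.sqrt d)^d) * (A⁻¹ * A) := by
              ring
          _ = ENNReal.ofReal (ε^d * (1+Real.sqrt d)^d) := by
              rw [ENNReal.inv_mul_cancel hA0 hAtop, mul_one,
                ← ENNReal.ofReal_mul (by positivity)]
      have : A ^ (1/q) * (A⁻¹ * I) ^ (1/p)
          ≤ ENNReal.ofReal (ε^d * (1+Real.sqrt d)^d) ^ (1/p)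
            * ENNReal.ofReal ((M:ℝ)^d * v₀) ^ (1/q) := by
        have hAle : A ≤ ENNReal.ofReal ((M:ℝ)^d * v₀) := by
          rw [hAeq]
          apply ENNReal.ofReal_le_ofReal
          have : r^d ≤ ((M:ℝ))^d := pow_le_pow_left₀ hr.le h2 d
          nlinarith [unitball_toReal_pos hd, hv₀]
        calc A ^ (1/q) * (A⁻¹ * I) ^ (1/p)
            ≤ ENNReal.ofReal ((M:ℝ)^d * v₀) ^ (1/q)
              * ENNReal.ofReal (ε^d * (1+Real.sqrt d)^d) ^ (1/p) := by gcongr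
          _ = ENNReal.ofReal (ε^d * (1+Real.sqrt d)^d) ^ (1/p)
              * ENNReal.ofReal ((M:ℝ)^d * v₀) ^ (1/q) := mul_comm _ _
      exact this.trans (le_add_right le_add_self)
    · -- large radii
      have hW0 : volume (ball a (M:ℝ)) ≠ 0 := vball_ne_zero a hM0
      have hWtop : volume (ball a (M:ℝ)) ≠ ⊤ := vball_ne_top a (M:ℝ)
      have hWA : volume (ball a (M:ℝ)) ≤ A := measure_mono (ball_subset_ball h2)
      have hIJ : I ≤ ENNReal.ofReal ((M:ℝ)^d * ε^d) := by
        rw [← ESet_volume M hε0.le hε1]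
        exact measure_mono Set.inter_subset_left
      have := mkernel2 hp hq hpq hA0 hAtop hW0 hWtop hWA hIJ
      rw [vball_eq' hd hM0.le a hv₀] at this
      exact this.trans le_add_self


/-- Necessary condition for the inclusion `M^{p₂}_{q₂} ⊆ M^{p₁}_{q₁}` (with a norm bound):
it forces `q₁ = q₂` and `p₁ ≤ p₂`. -/
theorem morrey_inclusion_necessary (d : ℕ) (hd : 1 ≤ d) (p₁ q₁ p₂ q₂ : ℝ)
    (hp₁ : 1 ≤ p₁) (hpq₁ : p₁ ≤ q₁) (hp₂ : 1 ≤ p₂) (hpq₂ : p₂ ≤ q₂)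
    (C : ℝ) (hC : 0 < C)
    (h : ∀ f : EuclideanSpace ℝ (Fin d) → ℝ, Measurable f →
      morreyNorm d p₁ q₁ f ≤ ENNReal.ofReal C * morreyNorm d p₂ q₂ f) :
    q₁ = q₂ ∧ p₁ ≤ p₂ := by
  have hd0 : 0 < d := hd
  have hp₁0 : 0 < p₁ := lt_of_lt_of_le one_pos hp₁
  have hp₂0 : 0 < p₂ := lt_of_lt_of_le one_pos hp₂
  have hq₁ : 0 < q₁ := lt_of_lt_of_le hp₁0 hpq₁
  have hq₂ : 0 < q₂ := lt_of_lt_of_le hp₂0 hpq₂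
  have hqq : q₁ = q₂ := part1 hd0 hp₁0 hq₁ hpq₁ hp₂0 hq₂ hpq₂ hC h
  subst hqq
  refine ⟨rfl, ?_⟩
  by_contra hcon
  push_neg at hcon
  set v₀ := (volume (ball (0:EuclideanSpace ℝ (Fin d)) 1)).toReal with hv₀
  have hv : 0 < v₀ := unitball_toReal_pos hd0
  obtain ⟨ε, ⟨hε0, hε1⟩, M, hM, hlt⟩ := part2_real d hd0 (q := q₁) hq₁ hp₁0 hp₂0 hcon hC hv
  have hM0 : (0:ℝ) < (M:ℝ) := by exact_mod_cast hM
  have hs0 : (0:ℝ) < Real.sqrt d := lt_of_lt_of_le one_pos (one_le_sqrt_d hd0)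
  have hmeas : Measurable (Set.indicator (ESet d M ε) 1 : EuclideanSpace ℝ (Fin d) → ℝ) :=
    measurable_const.indicator (ESet_measurable M ε)
  have hnorm := h _ hmeas
  have hlower := le_morreyNorm_ESet hd0 (p := p₁) (q := q₁) hp₁0 hM hε0.le hε1 hv₀
  have hupper := morreyNorm_ESet_le hd0 (p := p₂) (q := q₁) hp₂0 hq₁ hpq₂ hM hε0 hε1 hv₀
  set A₁ : ℝ := ((M:ℝ) * Real.sqrt d)^d * v₀ with hA₁def
  set A₂ : ℝ := ((M:ℝ))^d * v₀ with hA₂def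
  set B : ℝ := ((M:ℝ))^d * ε^d with hBdef
  set W₁ : ℝ := ((1:ℝ))^d * v₀ with hW₁def
  set F : ℝ := ε^d * (1+Real.sqrt d)^d with hFdef
  have hA₁ : 0 < A₁ := by positivity
  have hA₂ : 0 < A₂ := by positivity
  have hB : 0 < B := by positivity
  have hW₁ : 0 < W₁ := by positivity
  have hF : 0 < F := by positivity
  have hLHS : ENNReal.ofReal A₁ ^ (1/q₁) * ((ENNReal.ofReal A₁)⁻¹ * ENNReal.ofReal B) ^ (1/p₁)
      = ENNReal.ofReal (A₁ ^ (1/q₁) * (B/A₁) ^ (1/p₁)) := by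
    rw [← ENNReal.ofReal_inv_of_pos hA₁, ← ENNReal.ofReal_mul (by positivity),
      inv_mul_eq_div, ENNReal.ofReal_rpow_of_pos hA₁,
      ENNReal.ofReal_rpow_of_pos (by positivity), ← ENNReal.ofReal_mul (by positivity)]
  have hD₁ : ENNReal.ofReal W₁ ^ (1/q₁) = ENNReal.ofReal (W₁ ^ (1/q₁)) :=
    ENNReal.ofReal_rpow_of_pos hW₁
  have hD₂ : ENNReal.ofReal F ^ (1/p₂) * ENNReal.ofReal A₂ ^ (1/q₁)
      = ENNReal.ofReal (F ^ (1/p₂) * A₂ ^ (1/q₁)) := by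
    rw [ENNReal.ofReal_rpow_of_pos hF, ENNReal.ofReal_rpow_of_pos hA₂,
      ← ENNReal.ofReal_mul (by positivity)]
  have hD₃ : ENNReal.ofReal A₂ ^ (1/q₁) * ((ENNReal.ofReal A₂)⁻¹ * ENNReal.ofReal B) ^ (1/p₂)
      = ENNReal.ofReal (A₂ ^ (1/q₁) * (B/A₂) ^ (1/p₂)) := by
    rw [← ENNReal.ofReal_inv_of_pos hA₂, ← ENNReal.ofReal_mul (by positivity),
      inv_mul_eq_div, ENNReal.ofReal_rpow_of_pos hA₂,
      ENNReal.ofReal_rpow_of_pos (by positivity), ← ENNReal.ofReal_mul (by positivity)]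
  have hchain : ENNReal.ofReal (A₁ ^ (1/q₁) * (B/A₁) ^ (1/p₁))
      ≤ ENNReal.ofReal (C * (W₁ ^ (1/q₁) + F ^ (1/p₂) * A₂ ^ (1/q₁)
          + A₂ ^ (1/q₁) * (B/A₂) ^ (1/p₂))) := by
    rw [← hLHS]
    refine hlower.trans (hnorm.trans ?_)
    rw [ENNReal.ofReal_mul hC.le]
    gcongr
    refine hupper.trans ?_
    rw [hD₁, hD₂, hD₃, ← ENNReal.ofReal_add (by positivity) (by positivity),
      ← ENNReal.ofReal_add (by positivity) (by positivity)]
  rw [ENNReal.ofReal_le_ofReal_iff (by positivity)] at hchain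
  have hexp : C * (W₁ ^ (1/q₁) + F ^ (1/p₂) * A₂ ^ (1/q₁) + A₂ ^ (1/q₁) * (B/A₂) ^ (1/p₂))
      = C * (W₁ ^ (1/q₁)) + C * (F ^ (1/p₂) * A₂ ^ (1/q₁))
        + C * (A₂ ^ (1/q₁) * (B/A₂) ^ (1/p₂)) := by ring
  rw [hexp] at hchain
  linarith
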